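/- arXiv:2510.15858 — 7 statements merged into one kernel-verified Lean document; each statement's English description precedes it below -/
import Mathlib

section
/- There is no quadratic tower K₀ ⊆ K₁ ⊆ ⋯ ⊆ Kₙ of subfields of ℝ whose top field Kₙ contains the real cube root of 2; that is, the duplication of the cube is impossible by ruler and compass. -/
noncomputable section

open IntermediateField Module Polynomial

lemma cube_ne_two (b : ℚ) : b ^ 3 ≠ 2 := by
  intro h
  have hnum : b.num ^ 3 = 2 := by
    have : (b ^ 3).num = 2 := by rw [h]; rfl
    rwa [Rat.num_pow] at this
  have hd : b.num ∣ 2 := by rw [← hnum]; exact dvd_pow_self _ (by norm_num)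
  have h1 := Int.le_of_dvd (by norm_num) hd
  have h2 : -2 ≤ b.num := by
    have := Int.le_of_dvd (by norm_num) ((abs_dvd _ _).mpr hd)
    rcases abs_cases b.num with ⟨h,_⟩|⟨h,_⟩ <;> omega
  interval_cases b.num <;> norm_num at hnum

lemma minpoly_cbrt2 : minpoly ℚ ((2 : ℝ) ^ ((1 : ℝ) / 3)) = X ^ 3 - C 2 := by
  have hx3 : ((2 : ℝ) ^ ((1 : ℝ) / 3)) ^ (3 : ℕ) = 2 := by
    rw [← Real.rpow_natCast ((2:ℝ) ^ ((1:ℝ)/3)) 3, ← Real.rpow_mul (by norm_num)]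
    norm_num
  have hirr : Irreducible (X ^ 3 - C (2 : ℚ)) := by
    apply X_pow_sub_C_irreducible_of_prime (by norm_num)
    exact fun b => cube_ne_two b
  refine (minpoly.eq_of_irreducible_of_monic hirr ?_ ?_).symm
  · rw [one_div] at hx3; simp [hx3]
  · exact (monic_X_pow_sub_C _ (by norm_num))

/-- A quadratic tower: a finite chain `K 0 ⊆ K 1 ⊆ ⋯ ⊆ K n` of subfields of `ℝ`
(viewed as intermediate fields of `ℚ ⊆ ℝ`), with `K 0` the prime subfield
(the copy of `ℚ` in `ℝ`) and each relative degree `[K (i+1) : K i] = 2`. -/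
structure QuadraticTower (n : ℕ) where
  K : Fin (n + 1) → IntermediateField ℚ ℝ
  bot : K 0 = ⊥
  le : ∀ i : Fin n, K i.castSucc ≤ K i.succ
  deg : ∀ i : Fin n,
    Module.finrank (K i.castSucc) (IntermediateField.extendScalars (le i)) = 2

/-- No quadratic tower of subfields of `ℝ` has a top field containing the real cube
root of 2: the duplication of the cube is impossible by ruler and compass. -/
theorem cbrt_two_not_in_quadraticTower :
    ¬ ∃ (n : ℕ) (T : QuadraticTower n), (2 : ℝ) ^ ((1 : ℝ) / 3) ∈ T.K (Fin.last n) := by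
  rintro ⟨n, T, hx⟩
  have key : ∀ i : Fin (n+1), FiniteDimensional ℚ (T.K i) ∧
      finrank ℚ (T.K i) = 2 ^ (i : ℕ) := by
    intro i
    induction i using Fin.induction with
    | zero => rw [T.bot]; exact ⟨inferInstance, by simp⟩
    | succ i ih =>
      obtain ⟨hfd, hrk⟩ := ih
      have h1 : FiniteDimensional (T.K i.castSucc)
          (IntermediateField.extendScalars (T.le i)) :=
        FiniteDimensional.of_finrank_pos (by rw [T.deg i]; norm_num)
      have h2 : FiniteDimensional ℚ (IntermediateField.extendScalars (T.le i)) :=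
        FiniteDimensional.trans ℚ (T.K i.castSucc) _
      have hres : (IntermediateField.extendScalars (T.le i)).restrictScalars ℚ
          = T.K i.succ := IntermediateField.extendScalars_restrictScalars _
      have hrk2 : finrank ℚ (IntermediateField.extendScalars (T.le i)) = 2 ^ ((i : ℕ) + 1) := by
        haveI : Module.Free (T.K i.castSucc) (IntermediateField.extendScalars (T.le i)) :=
          Module.Free.of_divisionRing _ _
        rw [← Module.finrank_mul_finrank ℚ (T.K i.castSucc)
          (IntermediateField.extendScalars (T.le i)), T.deg i, hrk]
        simp [Fin.coe_castSucc]; ring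
      constructor
      · rw [← hres]; exact h2
      · rw [← hres]
        exact hrk2
  obtain ⟨hfd, hrk⟩ := key (Fin.last n)
  set x : ℝ := (2 : ℝ) ^ ((1 : ℝ) / 3) with hxdef
  have hint : IsIntegral ℚ (⟨x, hx⟩ : T.K (Fin.last n)) := IsIntegral.of_finite ℚ _
  have hdvd := minpoly.degree_dvd hint
  rw [hrk] at hdvd
  have hmp : minpoly ℚ ((⟨x, hx⟩ : T.K (Fin.last n))) = minpoly ℚ x := by
    have h := minpoly.algebraMap_eq (A := ℚ) (algebraMap (T.K (Fin.last n)) ℝ).injective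
      (⟨x, hx⟩ : T.K (Fin.last n))
    simpa using h.symm
  rw [hmp, minpoly_cbrt2, Polynomial.natDegree_X_pow_sub_C] at hdvd
  have := Nat.Prime.dvd_of_dvd_pow (p := 3) (by norm_num) hdvd
  norm_num at this
end
end

section
/- The real number cos(2π/9) is a root of the polynomial 8X³ − 6X + 1, this polynomial is irreducible over ℚ, and hence [ℚ(cos(2π/9)) : ℚ] = 3. -/
open Polynomial

noncomputable section

/-- `cos (2π/9)` is a root of `8 X ^ 3 - 6 X + 1`, this polynomial is irreducible
over `ℚ`, and hence `[ℚ(cos (2π/9)) : ℚ] = 3`. -/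
theorem cos_two_pi_div_nine_root_irreducible_degree
    (c : ℝ) (hc : c = Real.cos (2 * Real.pi / 9)) :
    aeval c (C 8 * X ^ 3 - C 6 * X + C 1 : ℚ[X]) = 0 ∧
      Irreducible (C 8 * X ^ 3 - C 6 * X + C 1 : ℚ[X]) ∧
      Module.finrank ℚ (IntermediateField.adjoin ℚ ({c} : Set ℝ)) = 3 := by
  set p : ℚ[X] := C 8 * X ^ 3 - C 6 * X + C 1 with hp
  -- root
  have hroot : aeval c p = 0 := by
    subst hc
    have h3 := Real.cos_three_mul (2 * Real.pi / 9)
    have h2 : (3:ℝ) * (2 * Real.pi / 9) = Real.pi - Real.pi / 3 := by ring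
    rw [h2, Real.cos_pi_sub, Real.cos_pi_div_three] at h3
    simp only [hp, map_add, map_sub, map_mul, map_pow, aeval_X, aeval_C, map_ofNat]
    push_cast
    nlinarith [h3]
  -- degree
  have hdeg : p.natDegree = 3 := by
    rw [hp]; compute_degree!
  have hp0 : p ≠ 0 := fun h => by simp [h] at hdeg
  -- irreducibility
  have hirr : Irreducible p := by
    rw [irreducible_iff_roots_eq_zero_of_degree_le_three (by omega) (by omega)]
    rw [Multiset.eq_zero_iff_forall_notMem]
    intro x hx
    rw [mem_roots hp0, IsRoot, hp] at hx
    simp only [eval_add, eval_sub, eval_mul, eval_pow, eval_X, eval_C] at hx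
    -- x is a rational root of 8X³-6X+1; then 2x is a root of X³-3X+1
    set y : ℚ := 2 * x with hy
    have hyroot : aeval y (X ^ 3 - C 3 * X + C 1 : ℤ[X]) = 0 := by
      simp only [map_add, map_sub, map_mul, map_pow, aeval_X, aeval_C, hy, map_ofNat]
      push_cast
      nlinarith [hx]
    have hmonic : (X ^ 3 - C 3 * X + C 1 : ℤ[X]).Monic := by
      monicity!
    obtain ⟨n, hn⟩ := isInteger_of_is_root_of_monic hmonic hyroot
    have hny : (n : ℚ) = y := hn
    have hint : n ^ 3 - 3 * n + 1 = 0 := by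
      have : (n:ℚ) ^ 3 - 3 * (n:ℚ) + 1 = 0 := by
        rw [hny]
        simpa [map_add, map_sub, map_mul, map_pow, map_ofNat] using hyroot
      exact_mod_cast this
    have hunit : n * (3 - n ^ 2) = 1 := by linear_combination -hint
    rcases Int.isUnit_iff.mp (IsUnit.of_mul_eq_one _ hunit) with h | h <;>
      rw [h] at hint <;> norm_num at hint
  refine ⟨hroot, hirr, ?_⟩
  -- degree of the field extension
  have halg : IsIntegral ℚ c := (IsAlgebraic.isIntegral ⟨p, hp0, hroot⟩)
  have hmin : minpoly ℚ c = p * C p.leadingCoeff⁻¹ := (minpoly.eq_of_irreducible hirr hroot).symm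
  have hlc : p.leadingCoeff ≠ 0 := leadingCoeff_ne_zero.mpr hp0
  have hdm : (minpoly ℚ c).natDegree = 3 := by
    rw [hmin, natDegree_mul hp0 (by simpa using inv_ne_zero hlc), natDegree_C, hdeg]
  rw [← hdm]
  exact IntermediateField.adjoin.finrank halg
end
end

section
/- There is no quadratic tower K₀ ⊆ K₁ ⊆ ⋯ ⊆ Kₙ of subfields of ℝ whose top field contains cos(2π/9); that is, the angle 2π/3 cannot be trisected by ruler and compass. -/
noncomputable section

namespace TrisectAux

open Polynomial IntermediateField

def pZ : ℤ[X] := X ^ 3 - 3 * X + 1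

lemma pZ_monic : pZ.Monic := by unfold pZ; monicity!

lemma pZ_deg : pZ.natDegree = 3 := by unfold pZ; compute_degree!

lemma pZ_irr : Irreducible pZ := by
  apply pZ_monic.irreducible_of_irreducible_map (Int.castRingHom (ZMod 2))
  have hm : (pZ.map (Int.castRingHom (ZMod 2))).Monic := pZ_monic.map _
  have hdeg : (pZ.map (Int.castRingHom (ZMod 2))).natDegree = 3 := by
    rw [pZ_monic.natDegree_map, pZ_deg]
  rw [hm.irreducible_iff_roots_eq_zero_of_degree_le_three (by omega) (by omega),
    Multiset.eq_zero_iff_forall_notMem]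
  intro x hx
  rw [mem_roots hm.ne_zero] at hx
  have : ((x : ZMod 2) ^ 3 - 3 * x + 1 : ZMod 2) = 0 := by
    simpa [pZ, IsRoot, eval_map] using hx
  revert this
  fin_cases x <;> decide

def pQ : ℚ[X] := X ^ 3 - 3 * X + 1

lemma map_pZ : pZ.map (algebraMap ℤ ℚ) = pQ := by
  unfold pZ pQ
  simp [Polynomial.map_sub, Polynomial.map_add, Polynomial.map_pow, Polynomial.map_mul]

lemma pQ_irr : Irreducible pQ := by
  rw [← map_pZ]
  exact (pZ_monic.irreducible_iff_irreducible_map_fraction_map).mp pZ_irr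

lemma pQ_monic : pQ.Monic := by unfold pQ; monicity!

def β : ℝ := 2 * Real.cos (2 * Real.pi / 9)

lemma cos_root : Polynomial.aeval β pQ = 0 := by
  have h3 : Real.cos (3 * (2 * Real.pi / 9)) = -(1/2) := by
    have : 3 * (2 * Real.pi / 9) = Real.pi - Real.pi / 3 := by ring
    rw [this, Real.cos_pi_sub, Real.cos_pi_div_three]
  rw [Real.cos_three_mul] at h3
  unfold pQ β
  simp only [map_add, map_sub, map_pow, map_mul, aeval_X, map_one, map_ofNat]
  nlinarith [h3]

lemma minpoly_deg : (minpoly ℚ β).natDegree = 3 := by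
  rw [← minpoly.eq_of_irreducible_of_monic pQ_irr cos_root pQ_monic]
  unfold pQ; compute_degree!

/-- Every field in a quadratic tower has 2-power degree over `ℚ`. -/
lemma tower_finrank {n : ℕ} (T : QuadraticTower n) (i : Fin (n + 1)) :
    FiniteDimensional ℚ ↥(T.K i) ∧ Module.finrank ℚ ↥(T.K i) = 2 ^ (i : ℕ) := by
  induction i using Fin.induction with
  | zero =>
      rw [T.bot]
      exact ⟨inferInstance, IntermediateField.finrank_bot (F := ℚ) (E := ℝ)⟩
  | succ i ih =>
      obtain ⟨hfd, hrk⟩ := ih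
      have hd := T.deg i
      have hf : FiniteDimensional ↥(T.K i.castSucc) ↥(extendScalars (T.le i)) :=
        FiniteDimensional.of_finrank_pos (by omega)
      have key : Module.finrank ℚ ↥(T.K i.castSucc) *
          Module.finrank ↥(T.K i.castSucc) ↥(extendScalars (T.le i))
          = Module.finrank ℚ ↥(extendScalars (T.le i)) :=
        (by set_option synthInstance.maxHeartbeats 400000 in exact Module.finrank_mul_finrank ℚ _ _)
  -- `↥(extendScalars (T.le i))` is definitionally `↥(T.K i.succ)` with the same
  -- `ℚ`-module structure, so `key` also computes `finrank ℚ ↥(T.K i.succ)`.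
      have key' : Module.finrank ℚ ↥(T.K i.succ)
          = Module.finrank ℚ ↥(T.K i.castSucc) *
            Module.finrank ↥(T.K i.castSucc) ↥(extendScalars (T.le i)) := key.symm
      have hfd' : FiniteDimensional ℚ ↥(T.K i.succ) := by
        have : FiniteDimensional ℚ ↥(extendScalars (T.le i)) :=
          FiniteDimensional.trans ℚ ↥(T.K i.castSucc) ↥(extendScalars (T.le i))
        exact this
      refine ⟨hfd', ?_⟩
      rw [key', hd, hrk, Fin.val_succ, Fin.coe_castSucc, pow_succ]

end TrisectAux

/-- No quadratic tower of subfields of `ℝ` has a top field containing `cos (2π/9)`: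
the angle `2π/3` cannot be trisected by ruler and compass. -/
theorem cos_two_pi_div_nine_not_in_quadraticTower :
    ¬ ∃ (n : ℕ) (T : QuadraticTower n), Real.cos (2 * Real.pi / 9) ∈ T.K (Fin.last n) := by
  rintro ⟨n, T, hmem⟩
  obtain ⟨hfd, hrk⟩ := TrisectAux.tower_finrank T (Fin.last n)
  have hβmem : TrisectAux.β ∈ T.K (Fin.last n) := by
    unfold TrisectAux.β
    have h2 : (2 : ℝ) ∈ T.K (Fin.last n) := by
      have h1 := (T.K (Fin.last n)).one_mem
      have := add_mem h1 h1
      norm_num at this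
      norm_num
    exact mul_mem h2 hmem
  set x : ↥(T.K (Fin.last n)) := ⟨TrisectAux.β, hβmem⟩ with hx
  have hxint : IsIntegral ℚ x := IsIntegral.of_finite ℚ x
  have hmp : minpoly ℚ x = minpoly ℚ TrisectAux.β := by
    have hinj : Function.Injective (algebraMap ↥(T.K (Fin.last n)) ℝ) :=
      (algebraMap ↥(T.K (Fin.last n)) ℝ).injective
    have h := minpoly.algebraMap_eq (A := ℚ) hinj x
    exact h.symm ▸ rfl
  have hdvd : (minpoly ℚ x).natDegree ∣ Module.finrank ℚ ↥(T.K (Fin.last n)) :=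
    minpoly.degree_dvd hxint
  rw [hmp, TrisectAux.minpoly_deg, hrk] at hdvd
  have h3 : (3 : ℕ) ∣ 2 := Nat.Prime.dvd_of_dvd_pow (by norm_num) hdvd
  norm_num at h3
end
end

section
/- The degree of cos(2π/17) over ℚ equals 8, a power of 2: [ℚ(cos(2π/17)) : ℚ] = 8. -/
noncomputable section

open Polynomial Complex IntermediateField

/-- The annihilating polynomial of `cos (2π/17)`. -/
private def P17 : ℚ[X] :=
  256 * X ^ 8 + 128 * X ^ 7 - 448 * X ^ 6 - 192 * X ^ 5 + 240 * X ^ 4 + 80 * X ^ 3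
    - 40 * X ^ 2 - 8 * X + 1

private lemma P17_natDegree : P17.natDegree = 8 := by
  unfold P17; compute_degree!

private lemma P17_ne_zero : P17 ≠ 0 := by
  intro h
  have := P17_natDegree
  rw [h] at this
  simp at this

set_option maxHeartbeats 1000000 in
set_option synthInstance.maxHeartbeats 400000 in
/-- The degree of `cos (2π/17)` over `ℚ` equals 8, a power of 2. -/
theorem finrank_adjoin_cos_two_pi_div_seventeen
    (c : ℝ) (hc : c = Real.cos (2 * Real.pi / 17)) :
    Module.finrank ℚ (IntermediateField.adjoin ℚ ({c} : Set ℝ)) = 8 := by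
  set ζ : ℂ := Complex.exp (2 * Real.pi * Complex.I / 17) with hζdef
  have hζprim : IsPrimitiveRoot ζ 17 := by
    have := Complex.isPrimitiveRoot_exp 17 (by norm_num)
    simpa [hζdef] using this
  have hζ17 : ζ ^ 17 = 1 := hζprim.pow_eq_one
  have hζ0 : ζ ≠ 0 := fun h => by simp [h] at hζ17
  have hζ1 : ζ ≠ 1 := hζprim.ne_one (by norm_num)
  -- geometric sum is zero
  have hsum : ∑ k ∈ Finset.range 17, ζ ^ k = 0 := by
    have := geom_sum_eq hζ1 17
    rw [this, hζ17]; simp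
  -- 2 * cos = ζ + ζ⁻¹
  have h2c : 2 * (c : ℂ) = ζ + ζ⁻¹ := by
    rw [hc]
    push_cast
    rw [Complex.cos, hζdef, ← Complex.exp_neg]
    push_cast
    ring_nf
  have hcform : (c : ℂ) = (ζ + ζ⁻¹) / 2 := by
    linear_combination h2c / 2
  -- key annihilation in ℂ
  have key : (256 * (c:ℂ) ^ 8 + 128 * (c:ℂ) ^ 7 - 448 * (c:ℂ) ^ 6 - 192 * (c:ℂ) ^ 5
      + 240 * (c:ℂ) ^ 4 + 80 * (c:ℂ) ^ 3 - 40 * (c:ℂ) ^ 2 - 8 * (c:ℂ) + 1) * ζ ^ 8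
      = ∑ k ∈ Finset.range 17, ζ ^ k := by
    have hinv : ζ⁻¹ = ζ ^ 16 := inv_eq_of_mul_eq_one_right (by rw [← pow_succ']; exact hζ17)
    rw [hcform, hinv]
    simp only [Finset.sum_range_succ, Finset.sum_range_zero]
    linear_combination ((1) + (1) * ζ ^ 1 + (1) * ζ ^ 2 + (1) * ζ ^ 3 + (1) * ζ ^ 4 + (1) * ζ ^ 5 + (1) * ζ ^ 6 + (1) * ζ ^ 7 + (5) * ζ ^ 9 + (11) * ζ ^ 10 - (9) * ζ ^ 11 - (14) * ζ ^ 12 + (7) * ζ ^ 13 + (8) * ζ ^ 14 + (1) * ζ ^ 17 + (1) * ζ ^ 18 + (1) * ζ ^ 19 + (1) * ζ ^ 20 + (1) * ζ ^ 21 + (1) * ζ ^ 22 + (1) * ζ ^ 23 + (5) * ζ ^ 24 + (20) * ζ ^ 25 - (25) * ζ ^ 26 - (49) * ζ ^ 27 + (21) * ζ ^ 28 + (28) * ζ ^ 29 + (1) * ζ ^ 34 + (1) * ζ ^ 35 + (1) * ζ ^ 36 + (1) * ζ ^ 37 + (1) * ζ ^ 38 + (1) * ζ ^ 39 + (11) *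 ζ ^ 40 - (25) * ζ ^ 41 - (70) * ζ ^ 42 + (35) * ζ ^ 43 + (56) * ζ ^ 44 + (1) * ζ ^ 51 + (1) * ζ ^ 52 + (1) * ζ ^ 53 + (1) * ζ ^ 54 + (1) * ζ ^ 55 - (9) * ζ ^ 56 - (49) * ζ ^ 57 + (35) * ζ ^ 58 + (70) * ζ ^ 59 + (1) * ζ ^ 68 + (1) * ζ ^ 69 + (1) * ζ ^ 70 + (1) * ζ ^ 71 - (14) * ζ ^ 72 + (21) * ζ ^ 73 + (56) * ζ ^ 74 + (1) * ζ ^ 85 + (1) * ζ ^ 86 + (1) * ζ ^ 87 + (7) * ζ ^ 88 + (28) * ζ ^ 89 + (1) * ζ ^ 102 + (1) * ζ ^ 103 + (8) * ζ ^ 104 + (1) * ζ ^ 119) * hζ17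
  have keyR : 256 * c ^ 8 + 128 * c ^ 7 - 448 * c ^ 6 - 192 * c ^ 5
      + 240 * c ^ 4 + 80 * c ^ 3 - 40 * c ^ 2 - 8 * c + 1 = 0 := by
    have h8 : ζ ^ 8 ≠ 0 := pow_ne_zero _ hζ0
    have := key.trans hsum
    rcases mul_eq_zero.mp this with h | h
    · exact_mod_cast h
    · exact absurd h h8
  have keyC : 256 * ((c:ℝ):ℂ) ^ 8 + 128 * ((c:ℝ):ℂ) ^ 7 - 448 * ((c:ℝ):ℂ) ^ 6 - 192 * ((c:ℝ):ℂ) ^ 5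
      + 240 * ((c:ℝ):ℂ) ^ 4 + 80 * ((c:ℝ):ℂ) ^ 3 - 40 * ((c:ℝ):ℂ) ^ 2 - 8 * ((c:ℝ):ℂ) + 1 = 0 := by
    exact_mod_cast keyR
  -- c is a root of P17
  have hroot : Polynomial.aeval c P17 = 0 := by
    simp only [P17, map_add, map_sub, map_mul, map_pow, aeval_X, map_ofNat, map_one]
    push_cast
    linear_combination keyR
  have hcint : IsIntegral ℚ c := by
    rw [← isAlgebraic_iff_isIntegral]
    exact ⟨P17, P17_ne_zero, hroot⟩
  set d : ℕ := (minpoly ℚ c).natDegree with hd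
  have hdle : d ≤ 8 := by
    have h1 := minpoly.degree_le_of_ne_zero ℚ c P17_ne_zero hroot
    have h2 := natDegree_le_natDegree h1
    rwa [P17_natDegree] at h2
  have htarget : Module.finrank ℚ (IntermediateField.adjoin ℚ ({c} : Set ℝ)) = d :=
    IntermediateField.adjoin.finrank hcint
  -- complex side
  have hinj : Function.Injective (algebraMap ℝ ℂ) := (algebraMap ℝ ℂ).injective
  have hminc : minpoly ℚ ((c : ℝ) : ℂ) = minpoly ℚ c := by
    have := minpoly.algebraMap_eq hinj c (A := ℚ)
    simpa using this
  have hc'int : IsIntegral ℚ ((c : ℝ) : ℂ) := by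
    rw [← isAlgebraic_iff_isIntegral]
    refine ⟨P17, P17_ne_zero, ?_⟩
    simp only [P17, map_add, map_sub, map_mul, map_pow, aeval_X, map_ofNat, map_one]
    push_cast
    linear_combination keyC
  set F : IntermediateField ℚ ℂ := IntermediateField.adjoin ℚ {((c : ℝ) : ℂ)} with hF
  have hFrank : Module.finrank ℚ F = d := by
    rw [hF]
    rw [IntermediateField.adjoin.finrank hc'int, hminc]
  -- the cyclotomic field
  have hζint : IsIntegral ℚ ζ := (hζprim.isIntegral (by norm_num)).tower_top
  set L : IntermediateField ℚ ℂ := IntermediateField.adjoin ℚ {ζ} with hL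
  have hLrank : Module.finrank ℚ L = 16 := by
    rw [hL, IntermediateField.adjoin.finrank hζint,
      ← Polynomial.cyclotomic_eq_minpoly_rat hζprim (by norm_num),
      Polynomial.natDegree_cyclotomic]
    decide
  -- c' lies in L
  have hζL : ζ ∈ L := IntermediateField.subset_adjoin ℚ {ζ} rfl
  have h2L : (2 : ℂ) ∈ L := by
    have := L.natCast_mem 2
    simpa using this
  have hc'L : ((c : ℝ) : ℂ) ∈ L := by
    rw [hcform]
    exact div_mem (add_mem hζL (inv_mem hζL)) h2L
  -- adjoin ζ over F
  set E : IntermediateField F ℂ := IntermediateField.adjoin F {ζ} with hE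
  have hres : E.restrictScalars ℚ = L := by
    rw [hE, hF]
    erw [IntermediateField.adjoin_adjoin_left]
    apply le_antisymm
    · rw [IntermediateField.adjoin_le_iff]
      apply Set.union_subset
      · exact Set.singleton_subset_iff.mpr hc'L
      · exact Set.singleton_subset_iff.mpr hζL
    · rw [hL]
      exact IntermediateField.adjoin.mono ℚ _ _ Set.subset_union_right
  -- [E : F] ≤ 2
  have hζintF : IsIntegral F ζ := hζint.tower_top
  set cF : F := ⟨((c : ℝ) : ℂ), by rw [hF]; exact IntermediateField.subset_adjoin ℚ _ rfl⟩ with hcF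
  have hq : Polynomial.aeval ζ (X ^ 2 - C (2 * cF) * X + 1 : Polynomial F) = 0 := by
    have halg : (algebraMap F ℂ) cF = ((c : ℝ) : ℂ) := rfl
    have hmulinv : ζ * ζ⁻¹ = 1 := mul_inv_cancel₀ hζ0
    simp only [map_add, map_sub, map_mul, map_pow, aeval_X, aeval_C, map_one, map_ofNat]
    rw [halg]
    push_cast
    linear_combination (-ζ) * h2c - hmulinv
  have hqne : (X ^ 2 - C (2 * cF) * X + 1 : Polynomial F) ≠ 0 := by
    intro h
    have hdeg : (X ^ 2 - C (2 * cF) * X + 1 : Polynomial F).natDegree = 2 := by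
      compute_degree!
    rw [h] at hdeg
    simp at hdeg
  have hErank_le : Module.finrank F E ≤ 2 := by
    rw [hE, IntermediateField.adjoin.finrank hζintF]
    have h1 := minpoly.degree_le_of_ne_zero F ζ hqne hq
    have h2 := natDegree_le_natDegree h1
    have hdeg : (X ^ 2 - C (2 * cF) * X + 1 : Polynomial F).natDegree = 2 := by
      compute_degree!
    rwa [hdeg] at h2
  -- tower law
  have htower : Module.finrank ℚ F * Module.finrank F E = Module.finrank ℚ E :=
    Module.finrank_mul_finrank ℚ F E
  have hEQ : Module.finrank ℚ E = 16 := by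
    have eqv : (E.restrictScalars ℚ) ≃ₗ[ℚ] E :=
      { toFun := fun x => ⟨x.1, x.2⟩
        invFun := fun x => ⟨x.1, x.2⟩
        map_add' := fun _ _ => rfl
        map_smul' := fun _ _ => rfl
        left_inv := fun _ => rfl
        right_inv := fun _ => rfl }
    rw [← eqv.finrank_eq, hres, hLrank]
  rw [hFrank] at htower
  rw [htarget]
  have he2 : Module.finrank F E ≤ 2 := hErank_le
  rw [hEQ] at htower
  set e := Module.finrank F E with hee
  interval_cases e <;> omega
end
end

section
/- The degree of cos(2π/11) over ℚ equals 5: [ℚ(cos(2π/11)) : ℚ] = 5; consequently cos(2π/11) does not lie in the top field of any (2,3)-tower of subfields of ℝ. -/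
noncomputable section

open Polynomial IntermediateField

/-- The candidate minimal polynomial of `cos (2π/11)` over `ℚ`. -/
private def qpoly : ℚ[X] := 32 * X ^ 5 + 16 * X ^ 4 - 32 * X ^ 3 - 12 * X ^ 2 + 6 * X + 1

private lemma qpoly_ne_zero : qpoly ≠ 0 := by
  intro h
  have := congrArg (Polynomial.eval 0) h
  simp [qpoly] at this

private lemma qpoly_natDegree_le : qpoly.natDegree ≤ 5 := by
  unfold qpoly
  compute_degree

private lemma aeval_qpoly (c : ℝ) (hc : c = Real.cos (2 * Real.pi / 11)) :
    Polynomial.aeval c qpoly = 0 := by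
  set θ : ℝ := 2 * Real.pi / 11 with hθ
  have hpi := Real.pi_pos
  have h11 : (11 : ℝ) * θ = 2 * Real.pi := by rw [hθ]; ring
  -- cos 6θ = cos 5θ
  have h65 : Real.cos (6 * θ) = Real.cos (5 * θ) := by
    have : 6 * θ = 2 * Real.pi - 5 * θ := by linarith
    rw [this, Real.cos_sub, Real.cos_two_pi, Real.sin_two_pi]
    ring
  have h6 : Real.cos (6 * θ) = 2 * (4 * Real.cos θ ^ 3 - 3 * Real.cos θ) ^ 2 - 1 := by
    rw [show (6 : ℝ) * θ = 2 * (3 * θ) by ring, Real.cos_two_mul, Real.cos_three_mul]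
  have h5 : Real.cos (5 * θ) =
      (2 * Real.cos θ ^ 2 - 1) * (4 * Real.cos θ ^ 3 - 3 * Real.cos θ) -
        (2 * Real.sin θ * Real.cos θ) * (3 * Real.sin θ - 4 * Real.sin θ ^ 3) := by
    rw [show (5 : ℝ) * θ = 2 * θ + 3 * θ by ring, Real.cos_add, Real.cos_two_mul,
      Real.cos_three_mul, Real.sin_two_mul, Real.sin_three_mul]
  have hs : Real.sin θ ^ 2 = 1 - Real.cos θ ^ 2 := Real.sin_sq θ
  have hkey : (Real.cos θ - 1) *
      (32 * Real.cos θ ^ 5 + 16 * Real.cos θ ^ 4 - 32 * Real.cos θ ^ 3 -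
        12 * Real.cos θ ^ 2 + 6 * Real.cos θ + 1) = 0 := by
    have h0 : Real.cos (6 * θ) - Real.cos (5 * θ) = 0 := by rw [h65]; ring
    rw [h6, h5] at h0
    linear_combination h0 +
      (2 * Real.cos θ - 8 * Real.cos θ ^ 3 + 8 * Real.cos θ * Real.sin θ ^ 2) * hs
  have hne : Real.cos θ - 1 ≠ 0 := by
    intro h
    have h1 : Real.cos θ = 1 := by linarith
    have hθ0 : θ ≠ 0 := by positivity
    have := (Real.cos_eq_one_iff_of_lt_of_lt (x := θ) (by nlinarith) (by nlinarith)).1 h1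
    exact hθ0 this
  have hq : 32 * Real.cos θ ^ 5 + 16 * Real.cos θ ^ 4 - 32 * Real.cos θ ^ 3 -
      12 * Real.cos θ ^ 2 + 6 * Real.cos θ + 1 = 0 := by
    rcases mul_eq_zero.1 hkey with h | h
    · exact absurd h hne
    · exact h
  rw [hc]
  simp only [qpoly, map_add, map_sub, map_mul, map_pow, map_ofNat, aeval_X, map_one]
  linarith [hq]

private lemma minpoly_natDegree_le (c : ℝ) (hc : c = Real.cos (2 * Real.pi / 11)) :
    (minpoly ℚ c).natDegree ≤ 5 ∧ IsIntegral ℚ c := by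
  have halg : IsAlgebraic ℚ c := ⟨qpoly, qpoly_ne_zero, aeval_qpoly c hc⟩
  have hint : IsIntegral ℚ c := halg.isIntegral
  refine ⟨?_, hint⟩
  have hdvd : minpoly ℚ c ∣ qpoly := minpoly.dvd ℚ c (aeval_qpoly c hc)
  exact le_trans (Polynomial.natDegree_le_of_dvd hdvd qpoly_ne_zero) qpoly_natDegree_le

set_option synthInstance.maxHeartbeats 1000000 in
set_option maxHeartbeats 1000000 in
/-- lower bound via the 11th cyclotomic field -/
private lemma minpoly_natDegree_ge (c : ℝ) (hc : c = Real.cos (2 * Real.pi / 11)) :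
    5 ≤ (minpoly ℚ c).natDegree := by
  -- work in ℂ
  set z : ℂ := Complex.exp (2 * Real.pi * Complex.I / 11) with hzdef
  have hz : IsPrimitiveRoot z 11 := Complex.isPrimitiveRoot_exp 11 (by norm_num)
  have hzint : IsIntegral ℚ z := (hz.isIntegral (by norm_num)).tower_top
  set θ : ℝ := 2 * Real.pi / 11 with hθ
  have hzθ : z = Complex.exp ((θ : ℂ) * Complex.I) := by
    rw [hzdef]; congr 1; push_cast [hθ]; ring
  have hzinv : z⁻¹ = Complex.exp ((-(θ : ℂ)) * Complex.I) := by
    rw [hzθ, ← Complex.exp_neg]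
    congr 1
    ring
  have hsum : z + z⁻¹ = 2 * (c : ℂ) := by
    rw [hzinv, hzθ, Complex.exp_mul_I, Complex.exp_mul_I, Complex.cos_neg, Complex.sin_neg,
      hc, Complex.ofReal_cos]
    ring
  -- fields
  set E : IntermediateField ℚ ℂ := IntermediateField.adjoin ℚ {(c : ℂ)} with hE
  set L : IntermediateField ℚ ℂ := IntermediateField.adjoin ℚ {z} with hL
  have hzL : z ∈ L := IntermediateField.subset_adjoin ℚ {z} rfl
  have hcL : (c : ℂ) ∈ L := by
    have h2 : (2 : ℂ) ≠ 0 := by norm_num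
    have : (c : ℂ) = (z + z⁻¹) / 2 := by rw [hsum]; ring
    rw [this]
    have h2L : (2 : ℂ) ∈ L := by
      simpa using L.algebraMap_mem (2 : ℚ)
    exact L.div_mem (L.add_mem hzL (L.inv_mem hzL)) h2L
  have hEL : E ≤ L :=
    IntermediateField.adjoin_le_iff.2 (by simpa using hcL)
  -- finrank ℚ L = 10
  have hLrank : Module.finrank ℚ L = 10 := by
    rw [show L = IntermediateField.adjoin ℚ {z} from rfl,
      IntermediateField.adjoin.finrank hzint,
      ← Polynomial.cyclotomic_eq_minpoly_rat hz (by norm_num),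
      Polynomial.natDegree_cyclotomic]
    decide
  -- relative degree at most 2
  have hext : IntermediateField.extendScalars hEL = IntermediateField.adjoin E {z} :=
    IntermediateField.extendScalars_adjoin hEL
  have hczE : IsIntegral E z := hzint.tower_top
  have hrel_le : Module.finrank E (IntermediateField.extendScalars hEL) ≤ 2 := by
    rw [hext, IntermediateField.adjoin.finrank hczE]
    have hcmem : (c : ℂ) ∈ E := IntermediateField.subset_adjoin ℚ {(c : ℂ)} rfl
    set p : Polynomial E := X ^ 2 - C (2 * ⟨(c : ℂ), hcmem⟩) * X + 1 with hp
    have hproot : Polynomial.aeval z p = 0 := by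
      have halg : (algebraMap E ℂ) (⟨(c : ℂ), hcmem⟩ : E) = (c : ℂ) := rfl
      rw [hp]
      simp only [map_add, map_sub, map_mul, map_pow, aeval_X, aeval_C, map_one, map_ofNat, halg]
      have hz0 : z ≠ 0 := by rw [hzθ]; exact Complex.exp_ne_zero _
      have hzz : z * z⁻¹ = 1 := mul_inv_cancel₀ hz0
      linear_combination z * hsum - hzz
    have hpne : p ≠ 0 := by
      intro h
      have := congrArg (fun r => Polynomial.coeff r 2) h
      simp [hp, coeff_one] at this
    have hdvd : minpoly E z ∣ p := minpoly.dvd E z hproot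
    refine le_trans (Polynomial.natDegree_le_of_dvd hdvd hpne) ?_
    rw [hp]
    compute_degree
  -- tower multiplication
  have hmul : Module.finrank ℚ E * IntermediateField.relfinrank E L = Module.finrank ℚ L :=
    IntermediateField.finrank_bot_mul_relfinrank hEL
  have hrel_eq : IntermediateField.relfinrank E L =
      Module.finrank E (IntermediateField.extendScalars hEL) :=
    IntermediateField.relfinrank_eq_finrank_of_le hEL
  have hErank : Module.finrank ℚ E = (minpoly ℚ (c : ℂ)).natDegree := by
    have hcint : IsIntegral ℚ (c : ℂ) := by
      have : IsAlgebraic ℚ c := ⟨qpoly, qpoly_ne_zero, aeval_qpoly c hc⟩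
      exact this.isIntegral.map (IsScalarTower.toAlgHom ℚ ℝ ℂ)
    exact IntermediateField.adjoin.finrank hcint
  have hminpoly_eq : minpoly ℚ ((c : ℝ) : ℂ) = minpoly ℚ c :=
    minpoly.algebraMap_eq (algebraMap ℝ ℂ).injective c
  -- conclude
  have h10 : Module.finrank ℚ E * IntermediateField.relfinrank E L = 10 := by
    rw [hmul, hLrank]
  have hrle : IntermediateField.relfinrank E L ≤ 2 := by rw [hrel_eq]; exact hrel_le
  have hge : 5 ≤ Module.finrank ℚ E := by
    by_contra h
    push_neg at h
    have : Module.finrank ℚ E * IntermediateField.relfinrank E L < 10 := by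
      calc Module.finrank ℚ E * IntermediateField.relfinrank E L ≤ 4 * 2 := by
            apply Nat.mul_le_mul (by omega) hrle
        _ < 10 := by norm_num
    omega
  rw [← hminpoly_eq, ← hErank]
  exact hge

private lemma degree_eq_five (c : ℝ) (hc : c = Real.cos (2 * Real.pi / 11)) :
    Module.finrank ℚ (IntermediateField.adjoin ℚ ({c} : Set ℝ)) = 5 := by
  obtain ⟨hle, hint⟩ := minpoly_natDegree_le c hc
  have hge := minpoly_natDegree_ge c hc
  rw [IntermediateField.adjoin.finrank hint]
  omega

/-- A (2,3)-tower: a finite chain `K 0 ⊆ K 1 ⊆ ⋯ ⊆ K n` of subfields of `ℝ`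
(viewed as intermediate fields of `ℚ ⊆ ℝ`), with `K 0` the prime subfield
(the copy of `ℚ` in `ℝ`) and each relative degree `[K (i+1) : K i]` equal to 2 or 3. -/
structure TwoThreeTower (n : ℕ) where
  K : Fin (n + 1) → IntermediateField ℚ ℝ
  bot : K 0 = ⊥
  le : ∀ i : Fin n, K i.castSucc ≤ K i.succ
  deg : ∀ i : Fin n,
    Module.finrank (K i.castSucc) (IntermediateField.extendScalars (le i)) = 2 ∨
    Module.finrank (K i.castSucc) (IntermediateField.extendScalars (le i)) = 3

private lemma tower_not_dvd_five {n : ℕ} (T : TwoThreeTower n) (i : Fin (n + 1)) :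
    ¬ (5 ∣ Module.finrank ℚ (T.K i)) := by
  induction i using Fin.induction with
  | zero =>
    rw [T.bot, IntermediateField.finrank_bot]
    omega
  | succ i ih =>
    have hmul : Module.finrank ℚ (T.K i.castSucc) *
        IntermediateField.relfinrank (T.K i.castSucc) (T.K i.succ) =
        Module.finrank ℚ (T.K i.succ) :=
      IntermediateField.finrank_bot_mul_relfinrank (T.le i)
    have hrel : IntermediateField.relfinrank (T.K i.castSucc) (T.K i.succ) =
        Module.finrank (T.K i.castSucc) (IntermediateField.extendScalars (T.le i)) :=
      IntermediateField.relfinrank_eq_finrank_of_le (T.le i)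
    intro hdvd
    rw [← hmul] at hdvd
    have h5 : Nat.Prime 5 := by norm_num
    rcases (Nat.Prime.dvd_mul h5).1 hdvd with h | h
    · exact ih h
    · rw [hrel] at h
      rcases T.deg i with h2 | h2 <;> rw [h2] at h <;> omega

/-- `[ℚ(cos (2π/11)) : ℚ] = 5`; consequently `cos (2π/11)` does not lie in the top
field of any (2,3)-tower of subfields of `ℝ`. -/
theorem cos_two_pi_div_eleven_degree_and_not_in_twoThreeTower
    (c : ℝ) (hc : c = Real.cos (2 * Real.pi / 11)) :
    Module.finrank ℚ (IntermediateField.adjoin ℚ ({c} : Set ℝ)) = 5 ∧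
      ¬ ∃ (n : ℕ) (T : TwoThreeTower n), c ∈ T.K (Fin.last n) := by
  refine ⟨degree_eq_five c hc, ?_⟩
  rintro ⟨n, T, hmem⟩
  have hle : IntermediateField.adjoin ℚ ({c} : Set ℝ) ≤ T.K (Fin.last n) :=
    IntermediateField.adjoin_le_iff.2 (by simpa using hmem)
  have hmul : Module.finrank ℚ (IntermediateField.adjoin ℚ ({c} : Set ℝ)) *
      IntermediateField.relfinrank (IntermediateField.adjoin ℚ ({c} : Set ℝ)) (T.K (Fin.last n)) =
      Module.finrank ℚ (T.K (Fin.last n)) :=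
    IntermediateField.finrank_bot_mul_relfinrank hle
  have h5 : 5 ∣ Module.finrank ℚ (T.K (Fin.last n)) := by
    rw [← hmul, degree_eq_five c hc]
    exact Dvd.intro _ rfl
  exact tower_not_dvd_five T (Fin.last n) h5
end
end

section
/- The degree of cos(2π/23) over ℚ equals 11: [ℚ(cos(2π/23)) : ℚ] = 11; consequently cos(2π/23) does not lie in the top field of any (2,3)-tower of subfields of ℝ. -/
noncomputable section

open IntermediateField Polynomial Module

set_option maxHeartbeats 1000000
set_option synthInstance.maxHeartbeats 400000

lemma finrank_adjoin_cos_eq_eleven (c : ℝ) (hc : c = Real.cos (2 * Real.pi / 23)) :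
    Module.finrank ℚ (IntermediateField.adjoin ℚ ({c} : Set ℝ)) = 11 := by
  have hπ := Real.pi_pos
  set θ : ℝ := 2 * Real.pi / 23 with hθ
  set ζ : ℂ := Complex.exp (2 * Real.pi * Complex.I / 23) with hζ
  have hζprim : IsPrimitiveRoot ζ 23 := by
    have h := Complex.isPrimitiveRoot_exp 23 (by norm_num)
    convert h using 2
    norm_num
  have hζexp : ζ = Complex.exp ((θ : ℂ) * Complex.I) := by
    rw [hζ]; congr 1; rw [hθ]; push_cast; ring
  have hζne : ζ ≠ 0 := Complex.exp_ne_zero _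
  set z : ℂ := (c : ℂ) with hzdef
  have hsum : ζ + ζ⁻¹ = 2 * z := by
    rw [hζexp, ← Complex.exp_neg, hzdef, hc, Complex.ofReal_cos, ← neg_mul]
    exact (Complex.two_cos _).symm
  have hζint : IsIntegral ℚ ζ := (hζprim.isIntegral (by norm_num)).tower_top
  set B : IntermediateField ℚ ℂ := IntermediateField.adjoin ℚ {ζ} with hB
  have hζB : ζ ∈ B := IntermediateField.subset_adjoin ℚ {ζ} rfl
  have hzB : z ∈ B := by
    have h2 : z = (ζ + ζ⁻¹) / 2 := by rw [hsum]; ring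
    rw [h2]
    have h2B : (2 : ℂ) ∈ B := by
      rw [show (2:ℂ) = 1 + 1 by norm_num]; exact B.add_mem B.one_mem B.one_mem
    exact B.div_mem (B.add_mem hζB (B.inv_mem hζB)) h2B
  set A : IntermediateField ℚ ℂ := IntermediateField.adjoin ℚ {z} with hA
  have hzA : z ∈ A := IntermediateField.subset_adjoin ℚ {z} rfl
  have hAB : A ≤ B := by
    rw [hA, IntermediateField.adjoin_le_iff]
    simpa using hzB
  have hfB : Module.finrank ℚ B = 22 := by
    rw [hB, IntermediateField.adjoin.finrank hζint,
      ← Polynomial.cyclotomic_eq_minpoly_rat hζprim (by norm_num),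
      Polynomial.natDegree_cyclotomic, Nat.totient_prime (by norm_num)]
  have hζnotA : ζ ∉ A := by
    intro hmem
    have hle : A ≤ (IsScalarTower.toAlgHom ℚ ℝ ℂ).fieldRange := by
      rw [hA, IntermediateField.adjoin_le_iff]
      intro x hx
      rcases hx with rfl
      exact ⟨c, rfl⟩
    rcases hle hmem with ⟨r, hr⟩
    have him : ζ.im = Real.sin θ := by
      rw [hζexp]; exact Complex.exp_ofReal_mul_I_im θ
    have hsin : 0 < Real.sin θ := by
      apply Real.sin_pos_of_pos_of_lt_pi
      · rw [hθ]; positivity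
      · rw [hθ]; nlinarith
    have h0 : ζ.im = 0 := by rw [← hr]; simp [IsScalarTower.toAlgHom]
    rw [him] at h0; linarith
  have hζintA : IsIntegral A ζ := hζint.tower_top
  -- ζ is a root of X² - 2z·X + 1 over A
  have hinv : ζ⁻¹ = 2 * z - ζ := by rw [← hsum]; ring
  have h3 : ζ * (2 * z - ζ) = 1 := by rw [← hinv]; exact mul_inv_cancel₀ hζne
  have hquad : ζ ^ 2 - 2 * z * ζ + 1 = 0 := by linear_combination -h3
  set w : A := ⟨2 * z, A.mul_mem (by rw [show (2:ℂ) = 1 + 1 by norm_num]; exact A.add_mem A.one_mem A.one_mem) hzA⟩ with hw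
  set p : Polynomial A := X ^ 2 - C w * X + 1 with hp
  have hpdeg : p.natDegree = 2 := by rw [hp]; compute_degree!
  have hpne : p ≠ 0 := fun h => by simp [h] at hpdeg
  have haev : Polynomial.aeval ζ p = 0 := by
    rw [hp]
    simp only [map_add, map_sub, map_mul, map_pow, aeval_X, aeval_C, map_one]
    have : (algebraMap A ℂ) w = 2 * z := rfl
    rw [this]
    exact hquad
  have hdle : (minpoly A ζ).natDegree ≤ 2 := by
    have := minpoly.degree_le_of_ne_zero A ζ hpne haev
    have h2 := Polynomial.natDegree_le_natDegree this
    omega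
  have hdge : 2 ≤ (minpoly A ζ).natDegree := by
    rw [minpoly.two_le_natDegree_iff hζintA]
    rintro ⟨a, ha⟩
    exact hζnotA (by rw [← ha]; exact a.2)
  have hmd : (minpoly A ζ).natDegree = 2 := le_antisymm hdle hdge
  -- extendScalars hAB = adjoin A {ζ}
  have hEB : IntermediateField.extendScalars hAB = IntermediateField.adjoin A {ζ} := by
    apply le_antisymm
    · rw [IntermediateField.extendScalars_le_iff]
      rw [hB, IntermediateField.adjoin_le_iff]
      intro x hx
      rcases hx with rfl
      exact IntermediateField.subset_adjoin A {ζ} rfl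
    · rw [IntermediateField.adjoin_le_iff]
      intro x hx
      rcases hx with rfl
      exact hζB
  have hrel : IntermediateField.relfinrank A B = 2 := by
    rw [IntermediateField.relfinrank_eq_finrank_of_le hAB, hEB,
      IntermediateField.adjoin.finrank hζintA, hmd]
  have h22 : Module.finrank ℚ A * 2 = 22 := by
    rw [← hrel, IntermediateField.finrank_bot_mul_relfinrank hAB, hfB]
  have hA11 : Module.finrank ℚ A = 11 := by omega
  -- transfer to ℝ
  have hmap : (IntermediateField.adjoin ℚ ({c} : Set ℝ)).map (IsScalarTower.toAlgHom ℚ ℝ ℂ) = A := by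
    rw [IntermediateField.adjoin_map, Set.image_singleton]
    rfl
  have := ((IntermediateField.adjoin ℚ ({c} : Set ℝ)).equivMap
    (IsScalarTower.toAlgHom ℚ ℝ ℂ)).toLinearEquiv.finrank_eq
  rw [hmap] at this
  rw [this, hA11]

/-- `[ℚ(cos (2π/23)) : ℚ] = 11`; consequently `cos (2π/23)` does not lie in the top
field of any (2,3)-tower of subfields of `ℝ`. -/
theorem cos_two_pi_div_twentythree_degree_and_not_in_twoThreeTower
    (c : ℝ) (hc : c = Real.cos (2 * Real.pi / 23)) :
    Module.finrank ℚ (IntermediateField.adjoin ℚ ({c} : Set ℝ)) = 11 ∧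
      ¬ ∃ (n : ℕ) (T : TwoThreeTower n), c ∈ T.K (Fin.last n) := by
  have h11 := finrank_adjoin_cos_eq_eleven c hc
  refine ⟨h11, ?_⟩
  rintro ⟨n, T, hmem⟩
  have key : ∀ i : Fin (n + 1), ∃ a b : ℕ, Module.finrank ℚ (T.K i) = 2 ^ a * 3 ^ b := by
    intro i
    induction i using Fin.induction with
    | zero => exact ⟨0, 0, by rw [T.bot]; simp [IntermediateField.finrank_bot]⟩
    | succ i ih =>
      obtain ⟨a, b, hab⟩ := ih
      have hstep := IntermediateField.finrank_bot_mul_relfinrank (T.le i)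
      have hrel : IntermediateField.relfinrank (T.K i.castSucc) (T.K i.succ) =
          Module.finrank (T.K i.castSucc) (IntermediateField.extendScalars (T.le i)) :=
        IntermediateField.relfinrank_eq_finrank_of_le (T.le i)
      rcases T.deg i with h | h
      · exact ⟨a + 1, b, by rw [← hstep, hab, hrel, h]; ring⟩
      · exact ⟨a, b + 1, by rw [← hstep, hab, hrel, h]; ring⟩
  obtain ⟨a, b, hab⟩ := key (Fin.last n)
  have hle : IntermediateField.adjoin ℚ ({c} : Set ℝ) ≤ T.K (Fin.last n) :=
    IntermediateField.adjoin_le_iff.2 (by simpa using hmem)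
  have hdvd : (11 : ℕ) ∣ 2 ^ a * 3 ^ b := by
    rw [← hab, ← IntermediateField.finrank_bot_mul_relfinrank hle, h11]
    exact dvd_mul_right 11 _
  have h11p : Nat.Prime 11 := by norm_num
  rcases (Nat.Prime.dvd_mul h11p).1 hdvd with h | h
  · have := Nat.Prime.dvd_of_dvd_pow h11p h; norm_num at this
  · have := Nat.Prime.dvd_of_dvd_pow h11p h; norm_num at this
end
end

section
/- The real number sin(1) is transcendental over ℚ. -/
noncomputable section

open Polynomial Complex Finset
open scoped Nat

local notation "ζ" => (⟨0, 1⟩ : GaussianInt)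

protected def Complex.abs : AbsoluteValue ℂ ℝ :=
  IsAbsoluteValue.toAbsoluteValue (norm : ℂ → ℝ)

protected theorem Complex.norm_eq_abs (z : ℂ) : ‖z‖ = Complex.abs z := rfl

protected theorem Complex.abs_exp (z : ℂ) : Complex.abs (Complex.exp z) = Real.exp z.re :=
  Complex.norm_exp z

protected theorem Complex.re_le_abs (z : ℂ) : z.re ≤ Complex.abs z := Complex.re_le_norm z

protected theorem Complex.abs_ofReal (r : ℝ) : Complex.abs (r : ℂ) = |r| := Complex.norm_real r

protected theorem Complex.abs_intCast (n : ℤ) : Complex.abs (n : ℂ) = |(n : ℝ)| :=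
  Complex.norm_intCast n

protected theorem Complex.abs_I : Complex.abs Complex.I = 1 := Complex.norm_I

theorem FloorRing.exists_prime_mul_pow_lt_factorial {K : Type*} [Field K] [LinearOrder K]
    [IsStrictOrderedRing K] [FloorRing K] (n : ℕ) (a c : K) :
    ∃ p > n, p.Prime ∧ a * c ^ p < (p - 1)! := by
  obtain ⟨N, hN⟩ := Filter.eventually_atTop.mp
    (FloorSemiring.eventually_mul_pow_lt_factorial_sub a c 1)
  obtain ⟨p, hp1, hp2⟩ := Nat.exists_infinite_primes (max N (n + 1))
  exact ⟨p, by omega, hp2, hN p (le_of_max_le_left hp1)⟩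

private lemma sumIDeriv_sub_deriv (f : ℤ[X]) :
    sumIDeriv f - derivative (sumIDeriv f) = f := by
  nth_rewrite 1 [sumIDeriv_eq_self_add f]
  rw [← sumIDeriv_derivative]
  ring

private lemma integral_est (f : ℤ[X]) (t : ℂ) (M : ℝ)
    (hM : ∀ s : ℝ, s ∈ Set.Icc (0:ℝ) 1 → Complex.abs (aeval ((s:ℂ) * t) f) ≤ M) :
    Complex.abs (Complex.exp t * aeval (0:ℂ) (sumIDeriv f) - aeval t (sumIDeriv f))
      ≤ Complex.abs t * Real.exp (Complex.abs t) * M := by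
  set Fc : ℂ[X] := (sumIDeriv f).map (algebraMap ℤ ℂ) with hFc
  set fc : ℂ[X] := f.map (algebraMap ℤ ℂ) with hfc
  have hkey : Fc - derivative Fc = fc := by
    rw [hFc, hfc, derivative_map, ← Polynomial.map_sub, sumIDeriv_sub_deriv]
  have hd : ∀ s : ℝ, HasDerivAt (fun y : ℝ => Complex.exp (t * (1 - (y:ℂ))) * eval ((y:ℂ) * t) Fc)
      (-(t * Complex.exp (t * (1 - (s:ℂ))) * eval ((s:ℂ) * t) fc)) s := by
    intro s
    have h1 : HasDerivAt (fun c : ℂ => Complex.exp (t * (1 - c)))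
        (Complex.exp (t * (1 - (s:ℂ))) * (t * (-1))) (s:ℂ) := by
      simpa using ((((hasDerivAt_id ((s:ℂ))).const_sub 1)).const_mul t).cexp
    have h2' : HasDerivAt (fun c : ℂ => c * t) (1 * t) (s:ℂ) :=
      (hasDerivAt_id ((s:ℂ))).mul_const t
    have h2 : HasDerivAt (fun c : ℂ => eval (c * t) Fc)
        (eval ((s:ℂ) * t) (derivative Fc) * (1 * t)) (s:ℂ) := by
      have := HasDerivAt.comp (s:ℂ) (Fc.hasDerivAt ((s:ℂ) * t)) h2'
      exact this
    have := (h1.mul h2).comp_ofReal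
    convert this using 1
    · rfl
    rw [← hkey]
    simp only [map_sub, eval_sub]
    ring
  have hcont : Continuous fun s : ℝ => -(t * Complex.exp (t * (1 - (s:ℂ))) * eval ((s:ℂ) * t) fc) := by
    have c0 : Continuous fun s : ℝ => (s:ℂ) := Complex.continuous_ofReal
    have c1 : Continuous fun s : ℝ => eval ((s:ℂ) * t) fc :=
      fc.continuous.comp (c0.mul continuous_const)
    have c2 : Continuous fun s : ℝ => Complex.exp (t * (1 - (s:ℂ))) :=
      (continuous_const.mul (continuous_const.sub c0)).cexp
    exact ((continuous_const.mul c2).mul c1).neg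
  have hint := intervalIntegral.integral_eq_sub_of_hasDerivAt
    (f := fun y : ℝ => Complex.exp (t * (1 - (y:ℂ))) * eval ((y:ℂ) * t) Fc)
    (f' := fun s : ℝ => -(t * Complex.exp (t * (1 - (s:ℂ))) * eval ((s:ℂ) * t) fc))
    (a := 0) (b := 1) (fun x _ => hd x) (hcont.intervalIntegrable 0 1)
  have hM0 : 0 ≤ M := le_trans (AbsoluteValue.nonneg _ _) (hM 0 (by norm_num))
  have hbnd : ‖∫ s in (0:ℝ)..1, -(t * Complex.exp (t * (1 - (s:ℂ))) * eval ((s:ℂ) * t) fc)‖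
      ≤ Complex.abs t * Real.exp (Complex.abs t) * M * |1 - 0| := by
    apply intervalIntegral.norm_integral_le_of_norm_le_const
    intro x hx
    rw [Set.uIoc_of_le (by norm_num : (0:ℝ) ≤ 1)] at hx
    obtain ⟨hx0, hx1⟩ := hx
    rw [norm_neg, norm_mul, norm_mul, Complex.norm_eq_abs, Complex.norm_eq_abs,
      Complex.norm_eq_abs, Complex.abs_exp]
    have habs1 : Complex.abs (1 - (x:ℂ)) ≤ 1 := by
      rw [← Complex.ofReal_one, ← Complex.ofReal_sub, Complex.abs_ofReal]
      rw [_root_.abs_of_nonneg (by linarith : (0:ℝ) ≤ 1 - x)]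
      linarith
    have hre : (t * (1 - (x:ℂ))).re ≤ Complex.abs t := by
      calc (t * (1 - (x:ℂ))).re ≤ Complex.abs (t * (1 - (x:ℂ))) := Complex.re_le_abs _
        _ = Complex.abs t * Complex.abs (1 - (x:ℂ)) := map_mul _ _ _
        _ ≤ Complex.abs t * 1 := mul_le_mul_of_nonneg_left habs1 (AbsoluteValue.nonneg _ _)
        _ = Complex.abs t := mul_one _
    have hfx : Complex.abs (eval ((x:ℂ) * t) fc) ≤ M := by
      have := hM x ⟨hx0.le, hx1⟩
      rwa [aeval_def, eval₂_eq_eval_map] at this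
    have h1 : Complex.abs t * Real.exp (t * (1 - (x:ℂ))).re
        ≤ Complex.abs t * Real.exp (Complex.abs t) :=
      mul_le_mul_of_nonneg_left (Real.exp_le_exp.2 hre) (AbsoluteValue.nonneg _ _)
    apply mul_le_mul h1 hfx (AbsoluteValue.nonneg _ _)
    positivity
  rw [hint] at hbnd
  simp only [Complex.ofReal_one, Complex.ofReal_zero, mul_zero, zero_mul, sub_zero, one_mul,
    mul_one, sub_self, Complex.exp_zero] at hbnd
  rw [aeval_def, eval₂_eq_eval_map, aeval_def, eval₂_eq_eval_map]
  rw [← Complex.norm_eq_abs, ← norm_neg]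
  have heq : -(Complex.exp t * eval 0 (Polynomial.map (algebraMap ℤ ℂ) (sumIDeriv f))
      - eval t (Polynomial.map (algebraMap ℤ ℂ) (sumIDeriv f)))
      = eval t Fc - Complex.exp t * eval 0 Fc := by rw [hFc]; ring
  rw [heq]
  calc ‖eval t Fc - Complex.exp t * eval 0 Fc‖
      ≤ Complex.abs t * Real.exp (Complex.abs t) * M * |1 - 0| := by
        convert hbnd using 2 <;> simp
    _ = Complex.abs t * Real.exp (Complex.abs t) * M := by norm_num

private lemma alg_of_sq {x : ℂ} (h : IsAlgebraic ℚ (x ^ 2)) : IsAlgebraic ℚ x := by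
  obtain ⟨p, p0, hp⟩ := h
  refine ⟨p.comp (X ^ 2), ?_, ?_⟩
  · intro hc
    rcases (comp_eq_zero_iff).mp hc with h | ⟨_, h⟩
    · exact p0 h
    · have : (X ^ 2 : ℚ[X]).natDegree = 0 := by rw [h]; simp
      simp at this
  · rw [aeval_comp]
    simpa using hp

private lemma expI_int_algebraic (h : IsAlgebraic ℚ (Real.sin 1)) :
    IsAlgebraic ℤ (Complex.exp Complex.I) := by
  have hs : IsAlgebraic ℚ ((Real.sin 1 : ℝ) : ℂ) := by
    obtain ⟨p, p0, hp⟩ := h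
    refine ⟨p, p0, ?_⟩
    have h1 : ((Real.sin 1 : ℝ) : ℂ) = algebraMap ℝ ℂ (Real.sin 1) := rfl
    rw [h1, Polynomial.aeval_algebraMap_apply, hp, map_zero]
  have hsin : IsAlgebraic ℚ (Complex.sin 1) := by
    rwa [show (1:ℂ) = ((1:ℝ):ℂ) by norm_num, ← Complex.ofReal_sin]
  have hI : IsAlgebraic ℚ (Complex.I) :=
    ⟨X ^ 2 + 1, by intro hc; simpa using congrArg (fun q => q.coeff 0) hc, by simp⟩
  rw [isAlgebraic_iff_isIntegral] at hsin hI
  have hcos : IsIntegral ℚ (Complex.cos 1) := by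
    rw [← isAlgebraic_iff_isIntegral]
    apply alg_of_sq
    have h2 : (Complex.cos 1) ^ 2 = 1 - (Complex.sin 1) ^ 2 := by
      linear_combination Complex.sin_sq_add_cos_sq 1
    rw [h2, isAlgebraic_iff_isIntegral]
    exact isIntegral_one.sub (by rw [sq]; exact hsin.mul hsin)
  have hexp : IsIntegral ℚ (Complex.exp Complex.I) := by
    have h3 : Complex.exp Complex.I = Complex.cos 1 + Complex.sin 1 * Complex.I := by
      rw [← Complex.exp_mul_I]; norm_num
    rw [h3]
    exact hcos.add (hsin.mul hI)
  rw [(IsFractionRing.isAlgebraic_iff ℤ ℚ ℂ)]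
  rwa [isAlgebraic_iff_isIntegral]

private lemma int_relation (h : IsAlgebraic ℚ (Real.sin 1)) :
    ∃ (n : ℕ) (a : ℕ → ℤ), 1 ≤ n ∧ a n ≠ 0 ∧
      ∑ k ∈ range (n + 1), (a k : ℂ) * Complex.exp (k * Complex.I) = 0 := by
  obtain ⟨P, P0, hP⟩ := expI_int_algebraic h
  refine ⟨P.natDegree, P.coeff, ?_, ?_, ?_⟩
  · rcases Nat.eq_zero_or_pos P.natDegree with h1 | h1
    swap
    · exact h1
    · exfalso
      rw [Polynomial.eq_C_of_natDegree_eq_zero h1] at hP P0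
      rw [aeval_C] at hP
      apply P0
      have : P.coeff 0 = 0 := by
        have := hP
        rwa [map_eq_zero_iff _ (by exact_mod_cast Int.cast_injective)] at this
      rw [this, map_zero]
  · exact Polynomial.leadingCoeff_ne_zero.mpr P0
  · have := Polynomial.aeval_eq_sum_range (R := ℤ) (p := P) (Complex.exp Complex.I)
    rw [hP] at this
    rw [show (0:ℂ) = ∑ i ∈ range (P.natDegree + 1), P.coeff i • Complex.exp Complex.I ^ i from this]
    apply Finset.sum_congr rfl
    intro k _
    rw [zsmul_eq_mul, Complex.exp_nat_mul]

private def bcoef (n : ℕ) (a : ℕ → ℤ) (m : ℤ) : ℤ :=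
  ∑ k ∈ range (n+1), ∑ l ∈ range (n+1), if (k:ℤ) - l = m then a k * a l else 0

private lemma bcoef_neg (n : ℕ) (a : ℕ → ℤ) (m : ℤ) : bcoef n a (-m) = bcoef n a m := by
  unfold bcoef
  rw [Finset.sum_comm]
  apply Finset.sum_congr rfl; intro k _
  apply Finset.sum_congr rfl; intro l _
  by_cases h : (k:ℤ) - l = m
  · rw [if_pos h, if_pos (by omega), mul_comm]
  · rw [if_neg h, if_neg (by omega)]

private lemma bcoef_zero (n : ℕ) (a : ℕ → ℤ) : bcoef n a 0 = ∑ k ∈ range (n+1), (a k)^2 := by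
  unfold bcoef
  apply Finset.sum_congr rfl; intro k hk
  have : ∀ l ∈ range (n+1), (if (k:ℤ) - l = 0 then a k * a l else 0)
      = if l = k then a k * a k else 0 := by
    intro l _
    by_cases h : l = k
    · subst h; simp
    · rw [if_neg (by omega), if_neg h]
  rw [Finset.sum_congr rfl this, Finset.sum_ite_eq' (range (n+1)) k (fun _ => a k * a k),
    if_pos hk, sq]

private lemma bcoef_zero_pos (n : ℕ) (a : ℕ → ℤ) (h : a n ≠ 0) : 0 < bcoef n a 0 := by
  rw [bcoef_zero]
  apply Finset.sum_pos' (fun k _ => sq_nonneg _)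
  exact ⟨n, Finset.self_mem_range_succ n, by positivity⟩

private lemma bcoef_rel (n : ℕ) (a : ℕ → ℤ)
    (hrel : ∑ k ∈ range (n + 1), (a k : ℂ) * Complex.exp (k * Complex.I) = 0) :
    ∑ m ∈ Icc (-(n:ℤ)) n, (bcoef n a m : ℂ) * Complex.exp (m * Complex.I) = 0 := by
  have key : ∑ m ∈ Icc (-(n:ℤ)) n, (bcoef n a m : ℂ) * Complex.exp (m * Complex.I)
      = (∑ k ∈ range (n+1), (a k : ℂ) * Complex.exp (k * Complex.I))
        * (∑ l ∈ range (n+1), (a l : ℂ) * Complex.exp (-(l : ℂ) * Complex.I)) := by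
    rw [Finset.sum_mul_sum]
    have lhs_eq : ∑ m ∈ Icc (-(n:ℤ)) n, (bcoef n a m : ℂ) * Complex.exp (m * Complex.I)
        = ∑ m ∈ Icc (-(n:ℤ)) n, ∑ k ∈ range (n+1), ∑ l ∈ range (n+1),
            (if (k:ℤ) - l = m then (a k * a l : ℂ) * Complex.exp (m * Complex.I) else 0) := by
      apply Finset.sum_congr rfl; intro m _
      unfold bcoef
      push_cast
      rw [Finset.sum_mul]
      apply Finset.sum_congr rfl; intro k _
      rw [Finset.sum_mul]
      apply Finset.sum_congr rfl; intro l _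
      split_ifs <;> simp
    rw [lhs_eq]
    rw [Finset.sum_comm]
    apply Finset.sum_congr rfl; intro k hk
    rw [Finset.sum_comm]
    apply Finset.sum_congr rfl; intro l hl
    have hmem : (k:ℤ) - l ∈ Icc (-(n:ℤ)) n := by
      rw [Finset.mem_range, Nat.lt_succ_iff] at hk hl
      rw [Finset.mem_Icc]; omega
    have : ∀ m ∈ Icc (-(n:ℤ)) n, (if (k:ℤ) - l = m then (a k * a l : ℂ) * Complex.exp (m * Complex.I) else 0)
        = if m = (k:ℤ) - l then (a k * a l : ℂ) * Complex.exp (((k:ℤ) - l : ℤ) * Complex.I) else 0 := by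
      intro m _
      by_cases h : m = (k:ℤ) - l
      · subst h; simp
      · rw [if_neg (fun hh => h hh.symm), if_neg h]
    rw [Finset.sum_congr rfl this, Finset.sum_ite_eq' _ _ _, if_pos hmem]
    rw [show ((((k:ℤ) - l : ℤ)) : ℂ) = (k : ℂ) - l by push_cast; ring]
    rw [sub_mul, Complex.exp_sub]
    rw [div_eq_mul_inv, ← Complex.exp_neg]
    ring
  rw [key, hrel, zero_mul]

private lemma bcoef_conj_rel (n : ℕ) (a : ℕ → ℤ)
    (hrel : ∑ k ∈ range (n + 1), (a k : ℂ) * Complex.exp (k * Complex.I) = 0) :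
    ∑ l ∈ range (n+1), (a l : ℂ) * Complex.exp (-(l : ℂ) * Complex.I) = 0 := by
  have := congrArg (starRingEnd ℂ) hrel
  rw [map_sum, map_zero] at this
  rw [← this]
  apply Finset.sum_congr rfl; intro l _
  rw [map_mul, ← Complex.exp_conj, map_mul, Complex.conj_I, map_natCast, map_intCast]
  rw [show (l:ℂ) * -I = -(l:ℂ) * I by ring]



private lemma zeta_sq : (⟨0, 1⟩ : GaussianInt) ^ 2 = -1 := by
  rw [sq]; rfl

private noncomputable def fpoly (n p : ℕ) : ℤ[X] :=
  X ^ (p - 1) * ∏ k ∈ Icc 1 n, (X ^ 2 + C ((k : ℤ) ^ 2)) ^ p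

private lemma fpoly_fact_zero (n p : ℕ) :
    fpoly n p = (X - C 0) ^ (p - 1) * ∏ k ∈ Icc 1 n, (X ^ 2 + C ((k : ℤ) ^ 2)) ^ p := by
  rw [C_0, sub_zero]; rfl

private lemma fpoly_eval_zero (n p : ℕ) :
    (∏ k ∈ Icc 1 n, ((X : ℤ[X]) ^ 2 + C ((k : ℤ) ^ 2)) ^ p).eval 0
      = ∏ k ∈ Icc 1 n, (k : ℤ) ^ (2 * p) := by
  rw [eval_prod]
  apply Finset.prod_congr rfl; intro k _
  rw [eval_pow, eval_add, eval_pow, eval_X, eval_C]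
  ring

private lemma quad_fact (a : GaussianInt) :
    (X - C (a * ζ)) * (X + C (a * ζ)) = X ^ 2 + C (a ^ 2) := by
  have h : C ((a * ζ) ^ 2) = - C (a ^ 2) := by
    rw [mul_pow, zeta_sq, mul_neg_one, map_neg]
  rw [show (X - C (a * ζ)) * (X + C (a * ζ)) = X ^ 2 - C ((a * ζ) ^ 2) by rw [C_pow]; ring,
    h, sub_neg_eq_add]

private lemma fpoly_fact (n p : ℕ) (m : ℤ) (hm : m ≠ 0) (hmn : |m| ≤ n) :
    ∃ g : Polynomial GaussianInt,
      (fpoly n p).map (algebraMap ℤ GaussianInt)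
        = (X - C ((m : GaussianInt) * ζ)) ^ p * g := by
  have hmap : (fpoly n p).map (algebraMap ℤ GaussianInt)
      = X ^ (p - 1) * ∏ k ∈ Icc 1 n,
          ((X - C ((k : GaussianInt) * ζ)) ^ p * (X + C ((k : GaussianInt) * ζ)) ^ p) := by
    unfold fpoly
    rw [Polynomial.map_mul, Polynomial.map_pow, map_X, Polynomial.map_prod]
    apply congrArg
    apply Finset.prod_congr rfl; intro k _
    rw [Polynomial.map_pow, Polynomial.map_add, Polynomial.map_pow, map_X, map_C]
    rw [show (algebraMap ℤ GaussianInt) ((k:ℤ)^2) = ((k : GaussianInt))^2 by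
      rw [map_pow]; norm_num]
    rw [← quad_fact, mul_pow]
  set m' : ℕ := m.natAbs with hm'
  rw [Int.abs_eq_natAbs] at hmn
  have hmem : m' ∈ Icc 1 n := by
    rw [Finset.mem_Icc]
    omega
  rw [hmap, ← Finset.mul_prod_erase _ _ hmem]
  rcases lt_or_gt_of_ne hm with hneg | hpos
  · have hmm : ((m' : GaussianInt)) = -(m : GaussianInt) := by
      rw [show ((m' : GaussianInt)) = (((m' : ℤ) : GaussianInt)) by push_cast; ring,
        show ((m' : ℤ)) = -m by omega]
      push_cast; ring
    have key : (X + C ((m' : GaussianInt) * ζ)) = X - C ((m : GaussianInt) * ζ) := by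
      rw [hmm, neg_mul, map_neg, ← sub_eq_add_neg]
    refine ⟨(X - C ((m' : GaussianInt) * ζ)) ^ p *
      (X ^ (p-1) * ∏ k ∈ (Icc 1 n).erase m',
        ((X - C ((k : GaussianInt) * ζ)) ^ p * (X + C ((k : GaussianInt) * ζ)) ^ p)), ?_⟩
    rw [← key]; ring
  · have key : ((m' : GaussianInt)) = (m : GaussianInt) := by
      rw [show ((m' : GaussianInt)) = (((m' : ℤ) : GaussianInt)) by push_cast; ring,
        show ((m' : ℤ)) = m by omega]
    refine ⟨(X + C ((m' : GaussianInt) * ζ)) ^ p *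
      (X ^ (p-1) * ∏ k ∈ (Icc 1 n).erase m',
        ((X - C ((k : GaussianInt) * ζ)) ^ p * (X + C ((k : GaussianInt) * ζ)) ^ p)), ?_⟩
    rw [← key]; ring



private lemma star_zeta : star (⟨0, 1⟩ : GaussianInt) = -ζ := by
  ext <;> simp

private lemma star_aeval (x : GaussianInt) (q : ℤ[X]) :
    star (aeval x q) = aeval (star x) q :=
  (Polynomial.aeval_algHom_apply ((starRingEnd GaussianInt).toIntAlgHom) x q).symm

private noncomputable def Tsum (n p : ℕ) (a : ℕ → ℤ) : GaussianInt :=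
  ∑ m ∈ Icc (-(n:ℤ)) n, ((bcoef n a m : GaussianInt))
    * aeval ((m : GaussianInt) * ζ) (sumIDeriv (fpoly n p))


private lemma Tsum_star (n p : ℕ) (a : ℕ → ℤ) : ∃ z : ℤ, Tsum n p a = (z : GaussianInt) := by
  have hterm : ∀ m : ℤ, star (((bcoef n a m : GaussianInt))
      * aeval ((m : GaussianInt) * ζ) (sumIDeriv (fpoly n p)))
      = ((bcoef n a m : GaussianInt)) * aeval (((-m : ℤ) : GaussianInt) * ζ) (sumIDeriv (fpoly n p)) := by
    intro m
    rw [star_mul', star_aeval, star_intCast]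
    congr 2
    rw [star_mul', star_zeta, star_intCast]
    push_cast
    ring
  have hstar : star (Tsum n p a) = Tsum n p a := by
    unfold Tsum
    rw [star_sum]
    rw [Finset.sum_congr rfl (fun m _ => hterm m)]
    refine Finset.sum_nbij' (i := fun m => -m) (j := fun m => -m)
      (fun m hm => by simp only [Finset.mem_Icc] at hm ⊢; omega)
      (fun m hm => by simp only [Finset.mem_Icc] at hm ⊢; omega)
      (fun m _ => by ring) (fun m _ => by ring)
      (fun m hm => by simp only [bcoef_neg n a m])
  refine ⟨(Tsum n p a).re, ?_⟩
  have him : (Tsum n p a).im = 0 := by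
    have := congrArg Zsqrtd.im hstar
    rw [Zsqrtd.im_star] at this
    omega
  ext
  · simp
  · simp [him]

private lemma Tsum_value (n p : ℕ) (a : ℕ → ℤ) (hn : 1 ≤ n) (hp : 0 < p) :
    ∃ W : GaussianInt,
      Tsum n p a = (((p-1)! * (bcoef n a 0 * ∏ k ∈ Icc 1 n, (k : ℤ) ^ (2*p)) : ℤ) : GaussianInt)
        + ((p ! : ℤ) : GaussianInt) * W := by
  obtain ⟨gp, _, hgp⟩ := aeval_sumIDeriv GaussianInt (fpoly n p) p
  obtain ⟨gp0, _, hgp0⟩ := aeval_sumIDeriv_of_pos ℤ (fpoly n p) hp (fun x y h => h)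
  -- value at 0 over ℤ
  have hmapid : (fpoly n p).map (algebraMap ℤ ℤ) = fpoly n p := by
    have : algebraMap ℤ ℤ = RingHom.id ℤ := by ext x; simp
    rw [this, Polynomial.map_id]
  have h0fact : (fpoly n p).map (algebraMap ℤ ℤ)
      = (X - C (0:ℤ)) ^ (p - 1) * ∏ k ∈ Icc 1 n, (X ^ 2 + C ((k : ℤ) ^ 2)) ^ p := by
    rw [hmapid]; exact fpoly_fact_zero n p
  have h0 := hgp0 (0:ℤ) h0fact
  rw [fpoly_eval_zero n p] at h0
  -- split the sum at 0
  have h0mem : (0:ℤ) ∈ Icc (-(n:ℤ)) n := by rw [Finset.mem_Icc]; omega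
  have hsplit : Tsum n p a = ((bcoef n a 0 : GaussianInt))
        * aeval ((0 : GaussianInt) * ζ) (sumIDeriv (fpoly n p))
      + ∑ m ∈ (Icc (-(n:ℤ)) n).erase 0, ((bcoef n a m : GaussianInt))
        * aeval ((m : GaussianInt) * ζ) (sumIDeriv (fpoly n p)) := by
    unfold Tsum
    rw [← Finset.add_sum_erase _ _ h0mem]
    norm_num
  have hzeroterm : aeval ((0 : GaussianInt) * ζ) (sumIDeriv (fpoly n p))
      = algebraMap ℤ GaussianInt ((p-1)! • (∏ k ∈ Icc 1 n, (k : ℤ) ^ (2*p)) + p ! • aeval (0:ℤ) gp0) := by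
    rw [zero_mul, show (0 : GaussianInt) = algebraMap ℤ GaussianInt (0:ℤ) from (map_zero _).symm,
      Polynomial.aeval_algebraMap_apply, h0]
  have hterm : ∀ m ∈ (Icc (-(n:ℤ)) n).erase 0,
      ((bcoef n a m : GaussianInt)) * aeval ((m : GaussianInt) * ζ) (sumIDeriv (fpoly n p))
      = ((p ! : ℤ) : GaussianInt) * (((bcoef n a m : GaussianInt)) * aeval ((m : GaussianInt) * ζ) gp) := by
    intro m hm
    rw [Finset.mem_erase, Finset.mem_Icc] at hm
    obtain ⟨hm0, hm1, hm2⟩ := hm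
    obtain ⟨g, hg⟩ := fpoly_fact n p m hm0 (by rw [abs_le]; omega)
    rw [hgp ((m : GaussianInt) * ζ) ⟨g, hg⟩]
    rw [nsmul_eq_mul]
    push_cast
    ring
  refine ⟨((bcoef n a 0 : GaussianInt)) * algebraMap ℤ GaussianInt (aeval (0:ℤ) gp0)
    + ∑ m ∈ (Icc (-(n:ℤ)) n).erase 0, ((bcoef n a m : GaussianInt)) * aeval ((m : GaussianInt) * ζ) gp, ?_⟩
  rw [hsplit, hzeroterm, Finset.sum_congr rfl hterm, ← Finset.mul_sum]
  rw [nsmul_eq_mul, nsmul_eq_mul]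
  push_cast
  ring

private lemma z_large (n p : ℕ) (hp : p.Prime) (hpn : n < p) (b0 w z : ℤ)
    (hb0 : 0 < b0) (hpb : b0 < (p:ℤ))
    (hz : z = ((p-1)! : ℤ) * (b0 * ∏ k ∈ Icc 1 n, (k : ℤ) ^ (2*p)) + (p ! : ℤ) * w) :
    ((p-1)! : ℤ) ≤ |z| := by
  have hfac : (p ! : ℤ) = (p : ℤ) * ((p-1)! : ℤ) := by
    rw [← Nat.mul_factorial_pred hp.ne_zero]; push_cast; ring
  set N : ℤ := ∏ k ∈ Icc 1 n, (k : ℤ) ^ (2*p) with hN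
  have hzu : z = ((p-1)! : ℤ) * (b0 * N + p * w) := by rw [hz, hfac]; ring
  have hprime : Prime (p : ℤ) := by rw [Int.prime_iff_natAbs_prime]; simpa using hp
  have hu : b0 * N + p * w ≠ 0 := by
    intro h
    have hdvd : (p : ℤ) ∣ b0 * N := ⟨-w, by linarith⟩
    rcases hprime.dvd_mul.mp hdvd with h1 | h1
    · have := Int.le_of_dvd hb0 h1
      omega
    · rw [hN] at h1
      obtain ⟨k, hk, hk2⟩ := hprime.exists_mem_finset_dvd h1
      have hk3 : (p : ℤ) ∣ (k : ℤ) := hprime.dvd_of_dvd_pow hk2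
      rw [Finset.mem_Icc] at hk
      have hkpos : (0:ℤ) < (k:ℤ) := by exact_mod_cast hk.1
      have := Int.le_of_dvd hkpos hk3
      have : (k:ℤ) ≤ (n:ℤ) := by exact_mod_cast hk.2
      omega
  rw [hzu, abs_mul]
  have h1 : (1:ℤ) ≤ |b0 * N + p * w| := Int.one_le_abs hu
  have h2 : (0:ℤ) ≤ ((p-1)! : ℤ) := by positivity
  calc ((p-1)! : ℤ) = ((p-1)! : ℤ) * 1 := by ring
    _ ≤ |((p-1)! : ℤ)| * |b0 * N + p * w| := by
        rw [abs_of_nonneg h2]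
        exact mul_le_mul_of_nonneg_left h1 h2

private lemma fbound (n p : ℕ) (hn : 1 ≤ n) (m : ℤ) (hm : |m| ≤ n) (s : ℝ)
    (hs : s ∈ Set.Icc (0:ℝ) 1) :
    Complex.abs (aeval ((s:ℂ) * ((m:ℂ) * Complex.I)) (fpoly n p))
      ≤ ((n:ℝ) * (2*(n:ℝ)^2)^n) ^ p := by
  obtain ⟨hs0, hs1⟩ := hs
  set x : ℂ := (s:ℂ) * ((m:ℂ) * Complex.I) with hx
  have hxabs : Complex.abs x ≤ (n:ℝ) := by
    rw [hx, map_mul, map_mul, Complex.abs_I, Complex.abs_ofReal, Complex.abs_intCast, mul_one]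
    have h1 : |s| ≤ 1 := by rw [_root_.abs_of_nonneg hs0]; exact hs1
    have h2 : |(m:ℝ)| ≤ (n:ℝ) := by exact_mod_cast (by exact_mod_cast hm : |(m:ℝ)| ≤ ((n:ℕ):ℝ))
    calc |s| * |(m:ℝ)| ≤ 1 * (n:ℝ) := by
          apply mul_le_mul h1 h2 (abs_nonneg _) zero_le_one
      _ = (n:ℝ) := one_mul _
  have haeval : aeval x (fpoly n p) = x ^ (p-1) * ∏ k ∈ Icc 1 n, (x^2 + ((k:ℤ):ℂ)^2) ^ p := by
    unfold fpoly
    rw [map_mul, map_pow, aeval_X, map_prod]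
    apply congrArg
    apply Finset.prod_congr rfl; intro k _
    rw [map_pow, map_add, map_pow, aeval_X, aeval_C]
    norm_num
  rw [haeval, map_mul, map_pow, map_prod]
  have hquad : ∀ k ∈ Icc 1 n, Complex.abs ((x^2 + ((k:ℤ):ℂ)^2) ^ p) ≤ (2*(n:ℝ)^2) ^ p := by
    intro k hk
    rw [Finset.mem_Icc] at hk
    rw [map_pow]
    apply pow_le_pow_left₀ (AbsoluteValue.nonneg _ _)
    calc Complex.abs (x^2 + ((k:ℤ):ℂ)^2)
        ≤ Complex.abs (x^2) + Complex.abs (((k:ℤ):ℂ)^2) := AbsoluteValue.add_le _ _ _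
      _ ≤ (n:ℝ)^2 + (n:ℝ)^2 := by
          apply add_le_add
          · rw [map_pow]
            apply pow_le_pow_left₀ (AbsoluteValue.nonneg _ _) hxabs
          · rw [map_pow, Complex.abs_intCast]
            apply pow_le_pow_left₀ (abs_nonneg _)
            push_cast
            rw [_root_.abs_of_nonneg (by positivity : (0:ℝ) ≤ ((k:ℕ):ℝ))]
            exact_mod_cast hk.2
      _ = 2*(n:ℝ)^2 := by ring
  have hn1 : (1:ℝ) ≤ (n:ℝ) := by exact_mod_cast hn
  calc Complex.abs x ^ (p-1) * ∏ k ∈ Icc 1 n, Complex.abs ((x^2 + ((k:ℤ):ℂ)^2) ^ p)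
      ≤ (n:ℝ) ^ p * ((2*(n:ℝ)^2) ^ p) ^ n := by
        apply mul_le_mul
        · calc Complex.abs x ^ (p-1) ≤ (n:ℝ) ^ (p-1) :=
              pow_le_pow_left₀ (AbsoluteValue.nonneg _ _) hxabs _
            _ ≤ (n:ℝ) ^ p := pow_le_pow_right₀ hn1 (Nat.sub_le p 1)
        · calc ∏ k ∈ Icc 1 n, Complex.abs ((x^2 + ((k:ℤ):ℂ)^2) ^ p)
              ≤ ∏ _k ∈ Icc 1 n, (2*(n:ℝ)^2) ^ p :=
                Finset.prod_le_prod (fun k _ => AbsoluteValue.nonneg Complex.abs _) hquad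
            _ = ((2*(n:ℝ)^2) ^ p) ^ (Icc 1 n).card := (Finset.prod_const _)
            _ = ((2*(n:ℝ)^2) ^ p) ^ n := by rw [Nat.card_Icc]; norm_num
        · exact Finset.prod_nonneg (fun k _ => AbsoluteValue.nonneg Complex.abs _)
        · positivity
      _ = ((n:ℝ) * (2*(n:ℝ)^2)^n) ^ p := by ring


/-- `sin 1` is transcendental over `ℚ`. -/
theorem sin_one_transcendental : Transcendental ℚ (Real.sin 1) := by
  intro halg
  obtain ⟨n, a, hn, han, hrel⟩ := int_relation halg
  have hb0 : 0 < bcoef n a 0 := bcoef_zero_pos n a han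
  have hrelb := bcoef_rel n a hrel
  set A : ℝ := (∑ m ∈ Icc (-(n:ℤ)) n, |(bcoef n a m : ℝ)|) * ((n:ℝ) * Real.exp n) with hA
  set c : ℝ := (n:ℝ) * (2*(n:ℝ)^2)^n with hc
  obtain ⟨p, hpgt, hpprime, hplt⟩ :=
    FloorRing.exists_prime_mul_pow_lt_factorial (K := ℝ) (max n (bcoef n a 0).natAbs) A c
  have hp : 0 < p := hpprime.pos
  have hpn : n < p := lt_of_le_of_lt (le_max_left _ _) hpgt
  have hpb : bcoef n a 0 < (p:ℤ) := by
    have h1 : (bcoef n a 0).natAbs < p := lt_of_le_of_lt (le_max_right _ _) hpgt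
    omega
  obtain ⟨z, hzT⟩ := Tsum_star n p a
  obtain ⟨W, hW⟩ := Tsum_value n p a hn hp
  -- the integer z
  have hz : z = ((p-1)! : ℤ) * (bcoef n a 0 * ∏ k ∈ Icc 1 n, (k : ℤ) ^ (2*p))
      + (p ! : ℤ) * W.re := by
    rw [hzT] at hW
    have hre := congrArg Zsqrtd.re hW
    rw [Zsqrtd.re_intCast] at hre
    rw [hre, Zsqrtd.re_add, Zsqrtd.re_intCast, Zsqrtd.re_mul, Zsqrtd.re_intCast,
      Zsqrtd.im_intCast]
    push_cast
    ring
  have hzlarge : ((p-1)! : ℤ) ≤ |z| :=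
    z_large n p hpprime hpn (bcoef n a 0) W.re z hb0 hpb hz
  -- the complex side
  have hTC : GaussianInt.toComplex (Tsum n p a)
      = ∑ m ∈ Icc (-(n:ℤ)) n, (bcoef n a m : ℂ)
          * aeval ((m:ℂ) * Complex.I) (sumIDeriv (fpoly n p)) := by
    unfold Tsum
    rw [map_sum]
    apply Finset.sum_congr rfl; intro m _
    rw [map_mul, map_intCast]
    congr 1
    rw [show ((m:ℂ) * Complex.I) = GaussianInt.toComplex ((m : GaussianInt) * ζ) by
      rw [map_mul, map_intCast]; simp [GaussianInt.toComplex_def']]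
    exact (Polynomial.aeval_algHom_apply (GaussianInt.toComplex.toIntAlgHom) _ _).symm
  have hJ : GaussianInt.toComplex (Tsum n p a)
      = -(∑ m ∈ Icc (-(n:ℤ)) n, (bcoef n a m : ℂ)
          * (Complex.exp ((m:ℂ) * Complex.I) * aeval (0:ℂ) (sumIDeriv (fpoly n p))
             - aeval ((m:ℂ) * Complex.I) (sumIDeriv (fpoly n p)))) := by
    rw [hTC]
    have hexpand : ∑ m ∈ Icc (-(n:ℤ)) n, (bcoef n a m : ℂ)
          * (Complex.exp ((m:ℂ) * Complex.I) * aeval (0:ℂ) (sumIDeriv (fpoly n p))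
             - aeval ((m:ℂ) * Complex.I) (sumIDeriv (fpoly n p)))
        = (∑ m ∈ Icc (-(n:ℤ)) n, (bcoef n a m : ℂ) * Complex.exp ((m:ℂ) * Complex.I))
            * aeval (0:ℂ) (sumIDeriv (fpoly n p))
          - ∑ m ∈ Icc (-(n:ℤ)) n, (bcoef n a m : ℂ)
              * aeval ((m:ℂ) * Complex.I) (sumIDeriv (fpoly n p)) := by
      rw [Finset.sum_mul, ← Finset.sum_sub_distrib]
      apply Finset.sum_congr rfl; intro m _
      ring
    rw [hexpand, hrelb, zero_mul, zero_sub, neg_neg]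
  -- bound
  have hcpos : (0:ℝ) ≤ c ^ p := by
    have : (0:ℝ) ≤ c := by
      rw [hc]; positivity
    positivity
  have habs : Complex.abs (GaussianInt.toComplex (Tsum n p a)) ≤ A * c ^ p := by
    rw [hJ, AbsoluteValue.map_neg]
    calc Complex.abs (∑ m ∈ Icc (-(n:ℤ)) n, (bcoef n a m : ℂ)
          * (Complex.exp ((m:ℂ) * Complex.I) * aeval (0:ℂ) (sumIDeriv (fpoly n p))
             - aeval ((m:ℂ) * Complex.I) (sumIDeriv (fpoly n p))))
        ≤ ∑ m ∈ Icc (-(n:ℤ)) n, Complex.abs ((bcoef n a m : ℂ)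
          * (Complex.exp ((m:ℂ) * Complex.I) * aeval (0:ℂ) (sumIDeriv (fpoly n p))
             - aeval ((m:ℂ) * Complex.I) (sumIDeriv (fpoly n p)))) :=
          Complex.abs.sum_le _ _
      _ ≤ ∑ m ∈ Icc (-(n:ℤ)) n, |(bcoef n a m : ℝ)| * (((n:ℝ) * Real.exp n) * c ^ p) := by
          apply Finset.sum_le_sum
          intro m hm
          rw [Finset.mem_Icc] at hm
          have hmabs : |m| ≤ (n:ℤ) := abs_le.mpr hm
          rw [map_mul, Complex.abs_intCast]
          apply mul_le_mul_of_nonneg_left _ (abs_nonneg _)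
          have hM : ∀ s : ℝ, s ∈ Set.Icc (0:ℝ) 1 →
              Complex.abs (aeval ((s:ℂ) * ((m:ℂ) * Complex.I)) (fpoly n p)) ≤ c ^ p :=
            fun s hs => fbound n p hn m hmabs s hs
          have h1 := integral_est (fpoly n p) ((m:ℂ) * Complex.I) (c ^ p) hM
          have habst : Complex.abs ((m:ℂ) * Complex.I) = |(m:ℝ)| := by
            rw [map_mul, Complex.abs_I, Complex.abs_intCast, mul_one]
          have hmn' : |(m:ℝ)| ≤ (n:ℝ) := by
            rw [← Int.cast_abs]
            exact_mod_cast hmabs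
          calc Complex.abs (Complex.exp ((m:ℂ) * Complex.I) * aeval (0:ℂ) (sumIDeriv (fpoly n p))
               - aeval ((m:ℂ) * Complex.I) (sumIDeriv (fpoly n p)))
              ≤ Complex.abs ((m:ℂ) * Complex.I)
                  * Real.exp (Complex.abs ((m:ℂ) * Complex.I)) * c ^ p := h1
            _ = |(m:ℝ)| * Real.exp |(m:ℝ)| * c ^ p := by rw [habst]
            _ ≤ (n:ℝ) * Real.exp n * c ^ p := by
                apply mul_le_mul_of_nonneg_right _ hcpos
                apply mul_le_mul hmn' (Real.exp_le_exp.2 hmn') (Real.exp_nonneg _)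
                  (Nat.cast_nonneg _)
            _ = ((n:ℝ) * Real.exp n) * c ^ p := by ring
      _ = A * c ^ p := by
          rw [hA, ← Finset.sum_mul]
          ring
  -- contradiction
  have hzc : Complex.abs (GaussianInt.toComplex (Tsum n p a)) = |(z:ℝ)| := by
    rw [hzT, map_intCast, Complex.abs_intCast]
  have hfin : ((p-1)! : ℝ) ≤ A * c ^ p := by
    calc ((p-1)! : ℝ) ≤ |(z:ℝ)| := by
          rw [← Int.cast_abs]
          exact_mod_cast hzlarge
      _ = Complex.abs (GaussianInt.toComplex (Tsum n p a)) := hzc.symm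
      _ ≤ A * c ^ p := habs
  linarith

end
end
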